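/- Let m : ℕ and E = EuclideanSpace ℝ (Fin m). Let R : E → ℝ be differentiable and let φ : E → E be differentiable and satisfy gradient R (φ v) = v for every v ∈ E (i.e., φ is a right inverse of the gradient map ρ = ∇R). Define Ψ : E → ℝ by Ψ(v) = ⟪v, φ v⟫ − R (φ v). Then Ψ is differentiable and gradient Ψ v = φ v for all v ∈ E. -/

import Mathlib

open scoped RealInnerProductSpace

theorem stmt_0 (m : ℕ)
    (R : EuclideanSpace ℝ (Fin m) → ℝ)
    (φ : EuclideanSpace ℝ (Fin m) → EuclideanSpace ℝ (Fin m))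
    (hR : Differentiable ℝ R) (hφ : Differentiable ℝ φ)
    (hinv : ∀ v, gradient R (φ v) = v)
    (Ψ : EuclideanSpace ℝ (Fin m) → ℝ)
    (hΨ : ∀ v, Ψ v = ⟪v, φ v⟫ - R (φ v)) :
    Differentiable ℝ Ψ ∧ ∀ v, gradient Ψ v = φ v := by
  have hΨf : Ψ = fun v => ⟪v, φ v⟫ - R (φ v) := funext hΨ
  have key : ∀ v, HasGradientAt Ψ (φ v) v := by
    intro v
    rw [hasGradientAt_iff_hasFDerivAt]
    have h1 : HasFDerivAt (fun x => ⟪x, φ x⟫)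
        ((fderivInnerCLM ℝ (v, φ v)).comp <|
          (ContinuousLinearMap.id ℝ _).prod (fderiv ℝ φ v)) v :=
      (hasFDerivAt_id v).inner ℝ (hφ v).hasFDerivAt
    have h2 : HasFDerivAt (fun x => R (φ x))
        ((fderiv ℝ R (φ v)).comp (fderiv ℝ φ v)) v :=
      (hR (φ v)).hasFDerivAt.comp v (hφ v).hasFDerivAt
    have hsub := h1.sub h2
    rw [show ((fun x => ⟪x, φ x⟫) - fun x => R (φ x)) = Ψ from hΨf.symm] at hsub
    refine hsub.congr_fderiv ?_
    have hRd : fderiv ℝ R (φ v) = (InnerProductSpace.toDual ℝ _) v := by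
      have h := hinv v
      unfold gradient at h
      have := (congrArg (InnerProductSpace.toDual ℝ _) h).symm
      simp only [LinearIsometryEquiv.apply_symm_apply] at this
      exact this.symm
    ext w
    simp [hRd, real_inner_comm, fderivInnerCLM, mul_comm]
  refine ⟨fun v => (key v).differentiableAt, fun v => (key v).gradient⟩
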